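/- Let h(x) = 1/(1-x) and suppose h_k, h_{k+1} are C¹ functions on [0,1] with h_k(0) = h_{k+1}(0) = 1 satisfying h'_{k+1} = 2 h_k h_{k+1} - h_k², i.e., h'_{k+1} + (h_{k+1} - h_k)² = h_{k+1}². Then ∫₀¹ (1 - h_{k+1}(x)/h(x))² dx = ∫₀¹ (h_{k+1}(x)/h(x) - h_k(x)/h(x))² dx. -/

import Mathlib

/-- Lemma "half": with `h(x) = 1/(1-x)`, so `h_k(x)/h(x) = (1-x)·h_k(x)`,
`‖1 - h_{k+1}/h‖_{L²[0,1]} = ‖h_{k+1}/h - h_k/h‖_{L²[0,1]}`. -/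
theorem lemma_half (h₀ h₁ : ℝ → ℝ)
    (hc₀ : ContinuousOn h₀ (Set.Icc 0 1))
    (hinit₀ : h₀ 0 = 1) (hinit₁ : h₁ 0 = 1)
    (hderiv : ∀ x ∈ Set.Icc (0:ℝ) 1,
      HasDerivAt h₁ (2 * h₀ x * h₁ x - (h₀ x)^2) x) :
    ∫ x in (0:ℝ)..1, (1 - (1 - x) * h₁ x)^2
      = ∫ x in (0:ℝ)..1, ((1 - x) * h₁ x - (1 - x) * h₀ x)^2 := by
  have hc₁ : ContinuousOn h₁ (Set.Icc 0 1) := fun x hx =>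
    (hderiv x hx).continuousAt.continuousWithinAt
  have hcx : ContinuousOn (fun x : ℝ => 1 - x) (Set.Icc 0 1) :=
    (continuous_const.sub continuous_id).continuousOn
  have hf : ContinuousOn (fun x : ℝ => (1 - (1 - x) * h₁ x)^2) (Set.Icc 0 1) :=
    ((continuousOn_const.sub (hcx.mul hc₁)).pow 2)
  have hg : ContinuousOn (fun x : ℝ => ((1 - x) * h₁ x - (1 - x) * h₀ x)^2)
      (Set.Icc 0 1) := (((hcx.mul hc₁).sub (hcx.mul hc₀)).pow 2)
  have hfi : IntervalIntegrable (fun x : ℝ => (1 - (1 - x) * h₁ x)^2)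
      MeasureTheory.volume 0 1 := by
    apply ContinuousOn.intervalIntegrable
    rwa [Set.uIcc_of_le (by norm_num : (0:ℝ) ≤ 1)]
  have hgi : IntervalIntegrable (fun x : ℝ => ((1 - x) * h₁ x - (1 - x) * h₀ x)^2)
      MeasureTheory.volume 0 1 := by
    apply ContinuousOn.intervalIntegrable
    rwa [Set.uIcc_of_le (by norm_num : (0:ℝ) ≤ 1)]
  set F : ℝ → ℝ := fun x => x + (1 - x)^2 * h₁ x with hF
  have hFd : ∀ x ∈ Set.uIcc (0:ℝ) 1,
      HasDerivAt F ((1 - (1 - x) * h₁ x)^2 - ((1 - x) * h₁ x - (1 - x) * h₀ x)^2) x := by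
    intro x hx
    rw [Set.uIcc_of_le (by norm_num : (0:ℝ) ≤ 1)] at hx
    have hsq : HasDerivAt (fun x : ℝ => (1 - x)^2) (-(2 * (1 - x))) x := by
      have h1 : HasDerivAt (fun x : ℝ => 1 - x) (-1) x := by
        simpa using (hasDerivAt_const x (1:ℝ)).fun_sub (hasDerivAt_id x)
      have := h1.fun_pow 2
      simpa [mul_comm] using this
    have hprod := hsq.fun_mul (hderiv x hx)
    have : HasDerivAt (fun y : ℝ => y + (1 - y)^2 * h₁ y) _ x := (hasDerivAt_id x).fun_add hprod
    convert this using 1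
    ring
  have hdi : IntervalIntegrable
      (fun x : ℝ => (1 - (1 - x) * h₁ x)^2 - ((1 - x) * h₁ x - (1 - x) * h₀ x)^2)
      MeasureTheory.volume 0 1 := hfi.sub hgi
  have key := intervalIntegral.integral_eq_sub_of_hasDerivAt hFd hdi
  have hF0 : F 0 = 1 := by simp [hF, hinit₁]
  have hF1 : F 1 = 1 := by simp [hF]
  rw [intervalIntegral.integral_sub hfi hgi, hF1, hF0, sub_self] at key
  linarith
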